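/- arXiv:1702.05677 — 5 statements merged into one kernel-verified Lean document; each statement's English description precedes it below -/
import Mathlib

section
/- (Sauer–Shelah) Let C ⊆ {0,1}^n have VC dimension d. Then for any A ⊆ [n] with |A| > d, the number of distinct projections |{c|_A : c ∈ C}| is at most Σ_{k=0}^{d} binom(|A|, k), which is at most (e|A|/d)^d. -/
open Finset

def IsTeachingSet {n : ℕ} (C : Finset (Fin n → Bool)) (c : Fin n → Bool)
    (A : Finset (Fin n)) : Prop :=
  ∀ c' ∈ C, c' ≠ c → ∃ i ∈ A, c' i ≠ c i

noncomputable def TD {n : ℕ} (C : Finset (Fin n → Bool)) (c : Fin n → Bool) : ℕ :=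
  sInf {k | ∃ A : Finset (Fin n), A.card = k ∧ IsTeachingSet C c A}

noncomputable def TDmin {n : ℕ} (C : Finset (Fin n → Bool)) : ℕ :=
  sInf {k | ∃ c ∈ C, TD C c = k}

noncomputable def patterns {n : ℕ} (C : Finset (Fin n → Bool)) (A : Finset (Fin n)) :
    Finset (A → Bool) :=
  @Finset.image _ _ (Classical.decEq _) (fun c (i : A) => c i.1) C

def IsXYClass {n : ℕ} (C : Finset (Fin n → Bool)) (a b : ℕ) : Prop :=
  ∀ A : Finset (Fin n), A.card ≤ a → (patterns C A).card ≤ b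

def Shatters {n : ℕ} (C : Finset (Fin n → Bool)) (A : Finset (Fin n)) : Prop :=
  ∀ f : A → Bool, ∃ c ∈ C, ∀ i : A, c i.1 = f i

noncomputable def VCD {n : ℕ} (C : Finset (Fin n → Bool)) : ℕ :=
  sSup {k | ∃ A : Finset (Fin n), A.card = k ∧ Shatters C A}

noncomputable def eraseMin {n : ℕ} (C : Finset (Fin n → Bool)) : Finset (Fin n → Bool) :=
  @Finset.filter _ (fun c => TD C c ≠ TDmin C) (Classical.decPred _) C

noncomputable def RTD {n : ℕ} (C : Finset (Fin n → Bool)) : ℕ :=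
  sSup (Set.range fun t => TDmin (eraseMin^[t] C))

noncomputable def fDim (a b : ℕ) : ℕ∞ :=
  sSup {m : ℕ∞ | ∃ (n : ℕ) (C : Finset (Fin n → Bool)),
    C.Nonempty ∧ IsXYClass C a b ∧ (TDmin C : ℕ∞) = m}

noncomputable def consistClass {n : ℕ} (C : Finset (Fin n → Bool)) (Y : Finset (Fin n))
    (b : Fin n → Bool) : Finset (Fin n → Bool) :=
  @Finset.filter _ (fun c => ∀ i ∈ Y, c i = b i) (Classical.decPred _) C

noncomputable def prodClass {n1 n2 : ℕ} (C1 : Finset (Fin n1 → Bool))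
    (C2 : Finset (Fin n2 → Bool)) : Finset (Fin (n1 + n2) → Bool) :=
  @Finset.filter _
    (fun c => (fun i => c (Fin.castAdd n2 i)) ∈ C1 ∧ (fun j => c (Fin.natAdd n1 j)) ∈ C2)
    (Classical.decPred _) Finset.univ


lemma sum_choose_le_real (d m : ℕ) (h : d < m) :
    ((∑ k ∈ Finset.range (d + 1), m.choose k : ℕ) : ℝ)
      ≤ (Real.exp 1 * (m : ℝ) / (d : ℝ)) ^ d := by
  rcases Nat.eq_zero_or_pos d with rfl | hd0
  · simp
  have hm : (0:ℝ) < m := by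
    have : 0 < m := by omega
    exact_mod_cast this
  have hdR : (0:ℝ) < d := by exact_mod_cast hd0
  set x : ℝ := (d : ℝ) / m with hxdef
  have hx0 : 0 < x := by positivity
  have hx1 : x ≤ 1 := by
    rw [hxdef, div_le_one hm]
    exact_mod_cast h.le
  have h1 : ((∑ k ∈ Finset.range (d + 1), m.choose k : ℕ) : ℝ) * x ^ d
      ≤ ∑ k ∈ Finset.range (d + 1), (m.choose k : ℝ) * x ^ k := by
    push_cast
    rw [Finset.sum_mul]
    refine Finset.sum_le_sum fun k hk => ?_
    have hkd : k ≤ d := by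
      have := Finset.mem_range.1 hk; omega
    exact mul_le_mul_of_nonneg_left (pow_le_pow_of_le_one hx0.le hx1 hkd)
      (by positivity)
  have h2 : ∑ k ∈ Finset.range (d + 1), (m.choose k : ℝ) * x ^ k
      ≤ ∑ k ∈ Finset.range (m + 1), (m.choose k : ℝ) * x ^ k := by
    refine Finset.sum_le_sum_of_subset_of_nonneg (Finset.range_subset_range.2 (by omega))
      fun k _ _ => by positivity
  have h3 : ∑ k ∈ Finset.range (m + 1), (m.choose k : ℝ) * x ^ k = (1 + x) ^ m := by
    rw [add_comm (1:ℝ) x, add_pow]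
    refine Finset.sum_congr rfl fun k _ => by ring
  have h4 : (1 + x) ^ m ≤ Real.exp d := by
    calc (1 + x) ^ m ≤ (Real.exp x) ^ m := by
          apply pow_le_pow_left₀ (by positivity)
          rw [add_comm]
          exact Real.add_one_le_exp x
      _ = Real.exp ((m : ℕ) * x) := (Real.exp_nat_mul x m).symm
      _ = Real.exp d := by
          congr 1
          rw [hxdef]
          field_simp
  have hxpow : 0 < x ^ d := by positivity
  have key : ((∑ k ∈ Finset.range (d + 1), m.choose k : ℕ) : ℝ)
      ≤ Real.exp d / x ^ d := by
    rw [le_div_iff₀ hxpow]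
    calc _ ≤ _ := h1
      _ ≤ _ := h2
      _ = _ := h3
      _ ≤ _ := h4
  refine key.trans (le_of_eq ?_)
  rw [hxdef, div_eq_mul_inv, ← inv_pow, inv_div, mul_div_assoc, mul_pow, Real.exp_one_pow]

theorem stmt8 (n : ℕ) (C : Finset (Fin n → Bool)) (d : ℕ) (hd : VCD C = d)
    (A : Finset (Fin n)) (hA : d < A.card) :
    (patterns C A).card ≤ ∑ k ∈ Finset.range (d + 1), (A.card).choose k ∧
    ((∑ k ∈ Finset.range (d + 1), (A.card).choose k : ℕ) : ℝ)
      ≤ (Real.exp 1 * (A.card : ℝ) / (d : ℝ)) ^ d := by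
  classical
  refine ⟨?_, sum_choose_le_real d A.card hA⟩
  -- transfer to Mathlib's Sauer-Shelah
  let F : (↥A → Bool) → Finset ↥A := fun f => Finset.univ.filter fun i => f i = true
  have hFinj : Function.Injective F := by
    intro f g hfg
    funext i
    have h1 : i ∈ F f ↔ i ∈ F g := by rw [hfg]
    simp only [F, Finset.mem_filter, Finset.mem_univ, true_and] at h1
    rw [Bool.eq_iff_iff]
    exact h1
  set 𝒜 : Finset (Finset ↥A) := (patterns C A).image F with h𝒜
  have hcard : (patterns C A).card = 𝒜.card :=
    (Finset.card_image_of_injective _ hFinj).symm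
  have hvc : 𝒜.vcDim ≤ d := by
    rw [Finset.vcDim]
    apply Finset.sup_le
    intro s hs
    rw [Finset.mem_shatterer] at hs
    set B : Finset (Fin n) := s.image Subtype.val with hB
    have hBcard : B.card = s.card :=
      Finset.card_image_of_injective _ Subtype.val_injective
    have hshat : Shatters C B := by
      intro f
      -- build the target subset of s
      set t : Finset ↥A := (s.attach.filter
        (fun i => f ⟨i.1.1, Finset.mem_image_of_mem _ i.2⟩ = true)).image Subtype.val with ht
      have hts : t ⊆ s := by
        intro y hy
        rw [ht] at hy
        obtain ⟨z, hz, rfl⟩ := Finset.mem_image.1 hy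
        exact z.2
      obtain ⟨u, hu, hsu⟩ := hs hts
      rw [h𝒜] at hu
      obtain ⟨p, hp, rfl⟩ := Finset.mem_image.1 hu
      unfold patterns at hp
      obtain ⟨c, hc, rfl⟩ := (@Finset.mem_image _ _ (Classical.decEq _) _ C p).1 hp
      refine ⟨c, hc, fun i => ?_⟩
      obtain ⟨j, hj, hji⟩ := Finset.mem_image.1 i.2
      have hjt : j ∈ t ↔ f ⟨j.1, Finset.mem_image_of_mem _ hj⟩ = true := by
        rw [ht]
        constructor
        · intro hjt
          obtain ⟨z, hz, hzj⟩ := Finset.mem_image.1 hjt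
          have : z.1 = j := hzj
          obtain ⟨hz1, hz2⟩ := Finset.mem_filter.1 hz
          subst this
          exact hz2
        · intro hf
          exact Finset.mem_image.2 ⟨⟨j, hj⟩, Finset.mem_filter.2 ⟨Finset.mem_attach _ _, hf⟩, rfl⟩
      have hiB : (⟨j.1, Finset.mem_image_of_mem _ hj⟩ : ↥B) = i := Subtype.ext hji
      have hju : j ∈ F (fun i : ↥A => c i.1) ↔ c j.1 = true := by
        simp [F]
      have hjt' : j ∈ t ↔ c j.1 = true := by
        rw [← hsu, Finset.mem_inter, hju]
        simp [hj]
      have : c j.1 = f i := by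
        rw [Bool.eq_iff_iff, ← hjt', hjt, hiB]
      rw [← hji]
      exact this
    have hsub : s.card ≤ VCD C := by
      rw [← hBcard, VCD]
      apply le_csSup
      · refine ⟨n, ?_⟩
        rintro k ⟨A', hA', -⟩
        rw [← hA']
        calc A'.card ≤ Finset.univ.card := Finset.card_le_univ A'
          _ = n := by simp
      · exact ⟨B, rfl, hshat⟩
    rw [hd] at hsub
    exact hsub
  calc (patterns C A).card = 𝒜.card := hcard
    _ ≤ 𝒜.shatterer.card := Finset.card_le_card_shatterer 𝒜
    _ ≤ ∑ k ∈ Finset.Iic 𝒜.vcDim, (Fintype.card ↥A).choose k :=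
        Finset.card_shatterer_le_sum_vcDim
    _ ≤ ∑ k ∈ Finset.range (d + 1), (A.card).choose k := by
        rw [Fintype.card_coe]
        refine Finset.sum_le_sum_of_subset fun k hk => ?_
        rw [Finset.mem_Iic] at hk
        rw [Finset.mem_range]
        omega
end

section
/- Every finite nonempty (3,5)-class C ⊆ {0,1}^n satisfies TD_min(C) ≤ 2; i.e., f(3,5) ≤ 2. -/
open Finset

open Finset

section AuxStmt12

lemma boolChoice : ∀ x y z : Bool, x ≠ y → z = x ∨ z = y := by decide

lemma boolEqOfNe : ∀ x y z : Bool, x ≠ z → y ≠ z → x = y := by decide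

lemma boolNeNot : ∀ a : Bool, a = !a → False := by decide

lemma six_le_card {α : Type*} {t : Finset α} {a1 a2 a3 a4 a5 a6 : α}
    (h1 : a1 ∈ t) (h2 : a2 ∈ t) (h3 : a3 ∈ t) (h4 : a4 ∈ t) (h5 : a5 ∈ t) (h6 : a6 ∈ t)
    (n12 : a1 ≠ a2) (n13 : a1 ≠ a3) (n14 : a1 ≠ a4) (n15 : a1 ≠ a5) (n16 : a1 ≠ a6)
    (n23 : a2 ≠ a3) (n24 : a2 ≠ a4) (n25 : a2 ≠ a5) (n26 : a2 ≠ a6)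
    (n34 : a3 ≠ a4) (n35 : a3 ≠ a5) (n36 : a3 ≠ a6)
    (n45 : a4 ≠ a5) (n46 : a4 ≠ a6) (n56 : a5 ≠ a6) : 6 ≤ t.card := by
  classical
  have hsub : ({a1,a2,a3,a4,a5,a6} : Finset α) ⊆ t := by
    intro x hx
    simp only [Finset.mem_insert, Finset.mem_singleton] at hx
    rcases hx with rfl|rfl|rfl|rfl|rfl|rfl <;> assumption
  have hcard : ({a1,a2,a3,a4,a5,a6} : Finset α).card = 6 := by
    rw [Finset.card_insert_of_notMem (by simp [n12,n13,n14,n15,n16]),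
        Finset.card_insert_of_notMem (by simp [n23,n24,n25,n26]),
        Finset.card_insert_of_notMem (by simp [n34,n35,n36]),
        Finset.card_insert_of_notMem (by simp [n45,n46]),
        Finset.card_insert_of_notMem (by simp [n56]),
        Finset.card_singleton]
  calc 6 = ({a1,a2,a3,a4,a5,a6} : Finset α).card := hcard.symm
    _ ≤ t.card := Finset.card_le_card hsub

end AuxStmt12

lemma exists_teaching_pair_stmt12 {n : ℕ} (C : Finset (Fin n → Bool)) (hC : C.Nonempty)
    (hclass : IsXYClass C 3 5) :
    ∃ c ∈ C, ∃ A : Finset (Fin n), A.card ≤ 2 ∧ IsTeachingSet C c A := by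
  classical
  by_cases htriv : ∀ c ∈ C, ∀ c' ∈ C, c = c'
  · obtain ⟨c, hc⟩ := hC
    exact ⟨c, hc, ∅, by simp, fun c' hc' hne => absurd (htriv c' hc' c hc) hne⟩
  push_neg at htriv
  obtain ⟨x, hx, y, hy, hxy⟩ := htriv
  obtain ⟨i0, hi0⟩ := Function.ne_iff.mp hxy
  -- minimize |C_i^v| over nonempty proper slices
  obtain ⟨p, hpP, hpmin⟩ := Finset.exists_min_image
    (s := Finset.univ.filter fun p : Fin n × Bool =>
      (C.filter (fun c => c p.1 = p.2)).Nonempty ∧ C.filter (fun c => c p.1 = p.2) ≠ C)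
    (fun p => (C.filter (fun c => c p.1 = p.2)).card)
    (by
      refine ⟨(i0, x i0), Finset.mem_filter.mpr ⟨Finset.mem_univ _, ?_, ?_⟩⟩
      · exact ⟨x, Finset.mem_filter.mpr ⟨hx, rfl⟩⟩
      · intro h
        have hyin : y ∈ C.filter (fun c => c i0 = x i0) := by rw [h]; exact hy
        exact hi0 ((Finset.mem_filter.mp hyin).2).symm)
  obtain ⟨i, v⟩ := p
  rw [Finset.mem_filter] at hpP
  set D : Finset (Fin n → Bool) := C.filter (fun c => c i = v) with hDdef
  have hDne : D.Nonempty := hpP.2.1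
  have hDneC : D ≠ C := hpP.2.2
  have hDsub : D ⊆ C := Finset.filter_subset _ _
  have hDi : ∀ c ∈ D, c i = v := fun c hc => (Finset.mem_filter.mp hc).2
  have hDmem : ∀ c ∈ C, c i = v → c ∈ D := fun c hc h => Finset.mem_filter.mpr ⟨hc, h⟩
  obtain ⟨e0, he0C, he0i⟩ : ∃ e ∈ C, e i ≠ v := by
    by_contra h
    push_neg at h
    exact hDneC (Finset.Subset.antisymm hDsub (fun c hc => hDmem c hc (h c hc)))
  -- Key: D shatters no pair of coordinates
  have keyA : ∀ j k : Fin n, (∀ a b : Bool, ∃ f ∈ D, f j = a ∧ f k = b) → False := by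
    intro j k hshat
    obtain ⟨f1, hf1D, hf1j, hf1k⟩ := hshat false false
    obtain ⟨f2, hf2D, hf2j, hf2k⟩ := hshat false true
    obtain ⟨f3, hf3D, hf3j, hf3k⟩ := hshat true false
    obtain ⟨f4, hf4D, hf4j, hf4k⟩ := hshat true true
    have hAcard : ({i, j, k} : Finset (Fin n)).card ≤ 3 := by
      have h1 : ({i, j, k} : Finset (Fin n)).card ≤ ({j, k} : Finset (Fin n)).card + 1 :=
        Finset.card_insert_le _ _
      have h2 : ({j, k} : Finset (Fin n)).card ≤ ({k} : Finset (Fin n)).card + 1 :=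
        Finset.card_insert_le _ _
      have h3 : ({k} : Finset (Fin n)).card = 1 := Finset.card_singleton _
      omega
    have h5 := hclass {i, j, k} hAcard
    have hiA : i ∈ ({i, j, k} : Finset (Fin n)) := by simp
    have hjA : j ∈ ({i, j, k} : Finset (Fin n)) := by simp
    have hkA : k ∈ ({i, j, k} : Finset (Fin n)) := by simp
    have hrmem : ∀ c ∈ C,
        (fun q : ({i, j, k} : Finset (Fin n)) => c q.1) ∈ patterns C {i, j, k} := by
      intro c hc
      unfold patterns
      exact @Finset.mem_image_of_mem _ _ (Classical.decEq _) _ _ _ hc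
    have hrne : ∀ (c c' : Fin n → Bool) (m : Fin n), m ∈ ({i, j, k} : Finset (Fin n)) →
        c m ≠ c' m →
        (fun q : ({i, j, k} : Finset (Fin n)) => c q.1) ≠
          (fun q : ({i, j, k} : Finset (Fin n)) => c' q.1) := by
      intro c c' m hm hne h
      exact hne (congrFun h ⟨m, hm⟩)
    have hfi : ∀ f ∈ D, ∀ g : Fin n → Bool, g i ≠ v →
        (fun q : ({i, j, k} : Finset (Fin n)) => f q.1) ≠
          (fun q : ({i, j, k} : Finset (Fin n)) => g q.1) := by
      intro f hf g hg
      refine hrne f g i hiA ?_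
      rw [hDi f hf]
      exact fun h => hg h.symm
    have hconst : ∀ e ∈ C, e i ≠ v → e j = e0 j ∧ e k = e0 k := by
      intro e heC hei
      by_contra hcontra
      have hne : e0 j ≠ e j ∨ e0 k ≠ e k := by
        by_contra h'
        push_neg at h'
        exact hcontra ⟨h'.1.symm, h'.2.symm⟩
      have he0e : (fun q : ({i, j, k} : Finset (Fin n)) => e0 q.1) ≠
          (fun q : ({i, j, k} : Finset (Fin n)) => e q.1) := by
        rcases hne with h | h
        · exact hrne e0 e j hjA h
        · exact hrne e0 e k hkA h
      have h6 : 6 ≤ (patterns C ({i, j, k} : Finset (Fin n))).card := by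
        refine six_le_card (hrmem f1 (hDsub hf1D)) (hrmem f2 (hDsub hf2D))
          (hrmem f3 (hDsub hf3D)) (hrmem f4 (hDsub hf4D)) (hrmem e0 he0C) (hrmem e heC)
          ?_ ?_ ?_ ?_ ?_ ?_ ?_ ?_ ?_ ?_ ?_ ?_ ?_ ?_ ?_
        · exact hrne f1 f2 k hkA (by rw [hf1k, hf2k]; exact Bool.false_ne_true)
        · exact hrne f1 f3 j hjA (by rw [hf1j, hf3j]; exact Bool.false_ne_true)
        · exact hrne f1 f4 j hjA (by rw [hf1j, hf4j]; exact Bool.false_ne_true)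
        · exact hfi f1 hf1D e0 he0i
        · exact hfi f1 hf1D e hei
        · exact hrne f2 f3 j hjA (by rw [hf2j, hf3j]; exact Bool.false_ne_true)
        · exact hrne f2 f4 j hjA (by rw [hf2j, hf4j]; exact Bool.false_ne_true)
        · exact hfi f2 hf2D e0 he0i
        · exact hfi f2 hf2D e hei
        · exact hrne f3 f4 k hkA (by rw [hf3k, hf4k]; exact Bool.false_ne_true)
        · exact hfi f3 hf3D e0 he0i
        · exact hfi f3 hf3D e hei
        · exact hfi f4 hf4D e0 he0i
        · exact hfi f4 hf4D e hei
        · exact he0e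
      omega
    -- minimality contradiction via the slice (j, !(e0 j))
    obtain ⟨fb, hfbD, hfbj, -⟩ := hshat (!(e0 j)) false
    obtain ⟨fa, hfaD, hfaj, -⟩ := hshat (e0 j) false
    have hsubD : C.filter (fun c => c j = !(e0 j)) ⊆ D := by
      intro z hz
      have hz' := Finset.mem_filter.mp hz
      refine hDmem z hz'.1 ?_
      by_contra hzi
      have hzj := (hconst z hz'.1 hzi).1
      rw [hzj] at hz'
      exact boolNeNot (e0 j) hz'.2
    have hlt : (C.filter (fun c => c j = !(e0 j))).card < D.card := by
      refine Finset.card_lt_card (Finset.ssubset_def.mpr ⟨hsubD, ?_⟩)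
      intro hsup
      have h2 := (Finset.mem_filter.mp (hsup hfaD)).2
      rw [hfaj] at h2
      exact boolNeNot (e0 j) h2
    have hmemP : ((j, !(e0 j)) : Fin n × Bool) ∈
        Finset.univ.filter (fun p : Fin n × Bool =>
          (C.filter (fun c => c p.1 = p.2)).Nonempty ∧ C.filter (fun c => c p.1 = p.2) ≠ C) := by
      refine Finset.mem_filter.mpr ⟨Finset.mem_univ _, ?_, ?_⟩
      · exact ⟨fb, Finset.mem_filter.mpr ⟨hDsub hfbD, hfbj⟩⟩
      · intro hEq
        have he0in : e0 ∈ C.filter (fun c => c j = !(e0 j)) := by rw [hEq]; exact he0C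
        exact boolNeNot (e0 j) (Finset.mem_filter.mp he0in).2
    have hge : D.card ≤ (C.filter (fun c => c j = !(e0 j))).card :=
      hpmin (j, !(e0 j)) hmemP
    exact lt_irrefl _ (lt_of_lt_of_le hlt hge)
  -- Case |D| = 1 : teach with {i}
  by_cases hD1 : D.card = 1
  · obtain ⟨c, hc⟩ := Finset.card_eq_one.mp hD1
    have hcD : c ∈ D := by rw [hc]; exact Finset.mem_singleton_self c
    refine ⟨c, hDsub hcD, {i}, by simp, ?_⟩
    intro c' hc' hne
    refine ⟨i, Finset.mem_singleton_self i, ?_⟩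
    intro h
    have hmem : c' ∈ D := hDmem c' hc' (by rw [h]; exact hDi c hcD)
    rw [hc] at hmem
    exact hne (Finset.mem_singleton.mp hmem)
  -- |D| ≥ 2
  have hD2 : 1 < D.card := by
    have := Finset.card_pos.mpr hDne
    omega
  obtain ⟨x1, hx1, y1, hy1, hxy1⟩ := Finset.one_lt_card.mp hD2
  obtain ⟨m1, hm1⟩ := Function.ne_iff.mp hxy1
  -- minimize |D_m^w| over nonempty proper slices of D
  obtain ⟨q, hqQ, hqmin⟩ := Finset.exists_min_image
    (s := Finset.univ.filter fun q : Fin n × Bool =>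
      (D.filter (fun c => c q.1 = q.2)).Nonempty ∧ D.filter (fun c => c q.1 = q.2) ≠ D)
    (fun q => (D.filter (fun c => c q.1 = q.2)).card)
    (by
      refine ⟨(m1, x1 m1), Finset.mem_filter.mpr ⟨Finset.mem_univ _, ?_, ?_⟩⟩
      · exact ⟨x1, Finset.mem_filter.mpr ⟨hx1, rfl⟩⟩
      · intro h
        have hyin : y1 ∈ D.filter (fun c => c m1 = x1 m1) := by rw [h]; exact hy1
        exact hm1 ((Finset.mem_filter.mp hyin).2).symm)
  obtain ⟨m0, w0⟩ := q
  rw [Finset.mem_filter] at hqQ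
  set E : Finset (Fin n → Bool) := D.filter (fun c => c m0 = w0) with hEdef
  have hEne : E.Nonempty := hqQ.2.1
  have hEneD : E ≠ D := hqQ.2.2
  have hEsub : E ⊆ D := Finset.filter_subset _ _
  have hEm0 : ∀ c ∈ E, c m0 = w0 := fun c hc => (Finset.mem_filter.mp hc).2
  have hEmem : ∀ c ∈ D, c m0 = w0 → c ∈ E := fun c hc h => Finset.mem_filter.mpr ⟨hc, h⟩
  by_cases hE1 : E.card = 1
  · -- teach the unique element of E with {i, m0}
    obtain ⟨c, hc⟩ := Finset.card_eq_one.mp hE1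
    have hcE : c ∈ E := by rw [hc]; exact Finset.mem_singleton_self c
    have hcD : c ∈ D := hEsub hcE
    refine ⟨c, hDsub hcD, {i, m0}, ?_, ?_⟩
    · exact le_trans (Finset.card_insert_le _ _) (by simp)
    · intro c' hc' hne
      by_cases hci : c' i = c i
      · refine ⟨m0, by simp, ?_⟩
        intro hm0
        have hc'D : c' ∈ D := hDmem c' hc' (by rw [hci]; exact hDi c hcD)
        have hc'E : c' ∈ E := hEmem c' hc'D (by rw [hm0]; exact hEm0 c hcE)
        rw [hc] at hc'E
        exact hne (Finset.mem_singleton.mp hc'E)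
      · exact ⟨i, Finset.mem_insert_self i _, hci⟩
  -- |E| ≥ 2 : derive a contradiction
  exfalso
  have hE2 : 1 < E.card := by
    have := Finset.card_pos.mpr hEne
    omega
  obtain ⟨e, heE, e', he'E, hee'⟩ := Finset.one_lt_card.mp hE2
  obtain ⟨m', hm'⟩ := Function.ne_iff.mp hee'
  obtain ⟨f0, hf0D, hf0E⟩ : ∃ f ∈ D, f ∉ E := by
    by_contra h
    push_neg at h
    exact hEneD (Finset.Subset.antisymm hEsub h)
  have hf0m0 : f0 m0 ≠ w0 := fun h => hf0E (hEmem f0 hf0D h)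
  by_cases hcase : ∃ f' ∈ D, f' ∉ E ∧ f' m' ≠ f0 m'
  · obtain ⟨f', hf'D, hf'E, hf'm'⟩ := hcase
    have hf'm0 : f' m0 ≠ w0 := fun h => hf'E (hEmem f' hf'D h)
    refine keyA m0 m' ?_
    intro a b
    by_cases ha : a = w0
    · rcases boolChoice (e m') (e' m') b hm' with hb | hb
      · exact ⟨e, hEsub heE, by rw [hEm0 e heE, ha], hb.symm⟩
      · exact ⟨e', hEsub he'E, by rw [hEm0 e' he'E, ha], hb.symm⟩
    · have ham0 : ∀ f : Fin n → Bool, f m0 ≠ w0 → f m0 = a :=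
        fun f hf => boolEqOfNe _ _ _ hf ha
      rcases boolChoice (f0 m') (f' m') b (Ne.symm hf'm') with hb | hb
      · exact ⟨f0, hf0D, ham0 f0 hf0m0, hb.symm⟩
      · exact ⟨f', hf'D, ham0 f' hf'm0, hb.symm⟩
  · push_neg at hcase
    -- every element of D \ E agrees with f0 at m'
    have hsubE : D.filter (fun c => c m' = !(f0 m')) ⊆ E := by
      intro z hz
      have hz' := Finset.mem_filter.mp hz
      by_contra hzE
      have hzm := hcase z hz'.1 hzE
      rw [hzm] at hz'
      exact boolNeNot (f0 m') hz'.2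
    have hcover := boolChoice (e m') (e' m') (!(f0 m')) hm'
    have hcover2 := boolChoice (e m') (e' m') (f0 m') hm'
    have hne2 : (D.filter (fun c => c m' = !(f0 m'))).Nonempty := by
      rcases hcover with h | h
      · exact ⟨e, Finset.mem_filter.mpr ⟨hEsub heE, h.symm⟩⟩
      · exact ⟨e', Finset.mem_filter.mpr ⟨hEsub he'E, h.symm⟩⟩
    have hneD : D.filter (fun c => c m' = !(f0 m')) ≠ D := by
      intro h
      have hf0in : f0 ∈ D.filter (fun c => c m' = !(f0 m')) := by rw [h]; exact hf0D
      exact boolNeNot (f0 m') (Finset.mem_filter.mp hf0in).2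
    have hmemQ : ((m', !(f0 m')) : Fin n × Bool) ∈
        Finset.univ.filter (fun q : Fin n × Bool =>
          (D.filter (fun c => c q.1 = q.2)).Nonempty ∧ D.filter (fun c => c q.1 = q.2) ≠ D) :=
      Finset.mem_filter.mpr ⟨Finset.mem_univ _, hne2, hneD⟩
    have hlt : (D.filter (fun c => c m' = !(f0 m'))).card < E.card := by
      refine Finset.card_lt_card (Finset.ssubset_def.mpr ⟨hsubE, ?_⟩)
      intro hsup
      rcases hcover2 with h | h
      · have hin : e ∈ D.filter (fun c => c m' = !(f0 m')) := hsup heE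
        have h2 := (Finset.mem_filter.mp hin).2
        rw [← h] at h2
        exact boolNeNot (f0 m') h2
      · have hin : e' ∈ D.filter (fun c => c m' = !(f0 m')) := hsup he'E
        have h2 := (Finset.mem_filter.mp hin).2
        rw [← h] at h2
        exact boolNeNot (f0 m') h2
    have hge : E.card ≤ (D.filter (fun c => c m' = !(f0 m'))).card :=
      hqmin (m', !(f0 m')) hmemQ
    exact lt_irrefl _ (lt_of_lt_of_le hlt hge)

theorem stmt12 (n : ℕ) (C : Finset (Fin n → Bool)) (hC : C.Nonempty)
    (hclass : IsXYClass C 3 5) :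
    TDmin C ≤ 2 := by
  obtain ⟨c, hcC, A, hAcard, hteach⟩ := exists_teaching_pair_stmt12 C hC hclass
  have h1 : TD C c ≤ A.card := Nat.sInf_le ⟨A, rfl, hteach⟩
  have h2 : TDmin C ≤ TD C c := Nat.sInf_le ⟨c, hcC, rfl⟩
  omega
end

section
/- Every finite nonempty (3,4)-class C ⊆ {0,1}^n satisfies TD_min(C) ≤ 2, and consequently RTD(C) ≤ 2 for every (3,4)-class (note every subclass of a (3,4)-class is a (3,4)-class). -/
open Finset

theorem mem_patterns {n : ℕ} {C : Finset (Fin n → Bool)} {A : Finset (Fin n)}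
    {q : A → Bool} : q ∈ patterns C A ↔ ∃ d ∈ C, (fun x : A => d x.1) = q := by
  unfold patterns
  exact @Finset.mem_image _ _ (Classical.decEq _) _ _ _

theorem keyTS {n : ℕ} (C : Finset (Fin n → Bool)) (hclass : IsXYClass C 3 4)
    (hC : C.Nonempty) : ∃ c ∈ C, ∃ A : Finset (Fin n), A.card ≤ 2 ∧ IsTeachingSet C c A := by
  classical
  obtain ⟨c0, hc0⟩ := hC
  have hpatmem : ∀ (A : Finset (Fin n)) (d : Fin n → Bool), d ∈ C →
      (fun x : A => d x.1) ∈ patterns C A := by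
    intro A d hd
    exact mem_patterns.mpr ⟨d, hd, rfl⟩
  by_cases hP : ∃ i j : Fin n, i ≠ j ∧ 4 ≤ (patterns C {i, j}).card
  · obtain ⟨i, j, hij, h4⟩ := hP
    have key : ∀ c ∈ C, ∀ c' ∈ C, c i = c' i → c j = c' j → c = c' := by
      intro c hc c' hc' hi hjj
      by_contra hne
      obtain ⟨k, hk⟩ : ∃ k, c k ≠ c' k := by
        by_contra h; push_neg at h; exact hne (funext h)
      have hki : k ≠ i := fun h => hk (h ▸ hi)
      have hkj : k ≠ j := fun h => hk (h ▸ hjj)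
      set T : Finset (Fin n) := {i, j, k} with hT
      have hsub : ({i, j} : Finset (Fin n)) ⊆ T := by
        intro x hx
        simp only [hT, Finset.mem_insert, Finset.mem_singleton] at hx ⊢
        tauto
      have hTcard : T.card ≤ 3 := by
        rw [hT]
        have h1 := Finset.card_insert_le i ({j, k} : Finset (Fin n))
        have h2 := Finset.card_insert_le j ({k} : Finset (Fin n))
        simp only [Finset.card_singleton] at h1 h2
        omega
      have hkT : k ∈ T := by simp [hT]
      have hpc : (fun x : T => c x.1) ∈ patterns C T := hpatmem T c hc
      have hsurj : Set.SurjOn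
          (fun (p : T → Bool) (x : ({i, j} : Finset (Fin n))) => p ⟨x.1, hsub x.2⟩)
          ↑((patterns C T).erase (fun x : T => c x.1)) ↑(patterns C {i, j}) := by
        intro q hq
        rw [Finset.mem_coe] at hq
        obtain ⟨d, hd, hdq⟩ := mem_patterns.mp hq
        by_cases hdc : (fun x : T => d x.1) = (fun x : T => c x.1)
        · refine ⟨fun x : T => c' x.1, ?_, ?_⟩
          · rw [Finset.mem_coe, Finset.mem_erase]
            exact ⟨fun h => hk (congrFun h ⟨k, hkT⟩).symm, hpatmem T c' hc'⟩
          · funext x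
            have hdx : d x.1 = c x.1 := congrFun hdc ⟨x.1, hsub x.2⟩
            have hcx : c x.1 = c' x.1 := by
              have hx := x.2
              simp only [Finset.mem_insert, Finset.mem_singleton] at hx
              rcases hx with h | h
              · rw [h]; exact hi
              · rw [h]; exact hjj
            calc c' x.1 = d x.1 := by rw [← hcx]; exact hdx.symm
            _ = q x := congrFun hdq x
        · refine ⟨fun x : T => d x.1, ?_, ?_⟩
          · rw [Finset.mem_coe, Finset.mem_erase]
            exact ⟨hdc, hpatmem T d hd⟩
          · funext x
            exact congrFun hdq x
      have h5 : (patterns C {i, j}).card ≤ ((patterns C T).erase (fun x : T => c x.1)).card :=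
        Finset.card_le_card_of_surjOn _ hsurj
      have herase := Finset.card_erase_of_mem hpc
      have hbound := hclass T hTcard
      omega
    refine ⟨c0, hc0, {i, j}, ?_, ?_⟩
    · have := Finset.card_insert_le i ({j} : Finset (Fin n))
      simp only [Finset.card_singleton] at this
      omega
    · intro c' hc' hne
      by_contra h
      push_neg at h
      exact hne (key c' hc' c0 hc0 (h i (by simp)) (h j (by simp)))
  · push_neg at hP
    have hB : ∀ i j : Fin n, i ≠ j → (patterns C {i, j}).card ≤ 3 := by
      intro i j hij
      have := hP i j hij
      omega
    by_cases hconst : ∀ (i : Fin n), ∀ c ∈ C, c i = c0 i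
    · refine ⟨c0, hc0, ∅, by simp, ?_⟩
      intro c' hc' hne
      exact absurd (funext fun i => hconst i c' hc') hne
    · push_neg at hconst
      obtain ⟨i0, c1, hc1, hne1⟩ := hconst
      set N : Set ℕ := {k | ∃ (i : Fin n) (v : Bool),
          (C.filter fun c => c i = v).Nonempty ∧ (C.filter fun c => c i = !v).Nonempty ∧
          (C.filter fun c => c i = v).card = k} with hN
      have hNne : N.Nonempty := by
        refine ⟨_, i0, c1 i0, ⟨c1, by simp [hc1]⟩, ⟨c0, ?_⟩, rfl⟩
        rw [Finset.mem_filter]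
        refine ⟨hc0, ?_⟩
        cases h0 : c0 i0 <;> cases h1 : c1 i0 <;> simp_all
      obtain ⟨i, v, hSne, hSne', hScard⟩ := Nat.sInf_mem hNne
      set S := C.filter fun c => c i = v with hS
      have huniq : ∀ c ∈ S, ∀ c' ∈ S, c = c' := by
        intro c hcS c' hc'S
        by_contra hne
        obtain ⟨j, hj⟩ : ∃ j, c j ≠ c' j := by
          by_contra h; push_neg at h; exact hne (funext h)
        have hcC : c ∈ C := (Finset.mem_filter.mp hcS).1
        have hci : c i = v := (Finset.mem_filter.mp hcS).2
        have hc'C : c' ∈ C := (Finset.mem_filter.mp hc'S).1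
        have hc'i : c' i = v := (Finset.mem_filter.mp hc'S).2
        have hjne : j ≠ i := by rintro rfl; rw [hci, hc'i] at hj; exact hj rfl
        obtain ⟨c2, hc2S⟩ := hSne'
        have hc2C : c2 ∈ C := (Finset.mem_filter.mp hc2S).1
        have hc2i : c2 i = !v := (Finset.mem_filter.mp hc2S).2
        obtain ⟨w, hw⟩ : ∃ w, c2 j = w := ⟨c2 j, rfl⟩
        have hiT : i ∈ ({i, j} : Finset (Fin n)) := by simp
        have hjT : j ∈ ({i, j} : Finset (Fin n)) := by simp
        have hsub : (C.filter fun d => d j = !w) ⊆ S := by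
          intro d hd
          have hdC : d ∈ C := (Finset.mem_filter.mp hd).1
          have hdj : d j = !w := (Finset.mem_filter.mp hd).2
          rw [hS, Finset.mem_filter]
          refine ⟨hdC, ?_⟩
          by_contra hdi
          have hdi' : d i = !v := by cases hv : v <;> cases hd2 : d i <;> simp_all
          have hex : ∀ a b : Bool, ∃ e ∈ C, e i = a ∧ e j = b := by
            intro a b
            by_cases hav : a = v
            · by_cases hbc : b = c j
              · exact ⟨c, hcC, by rw [hci, hav], by rw [hbc]⟩
              · refine ⟨c', hc'C, by rw [hc'i, hav], ?_⟩
                cases b <;> cases hcj : c j <;> cases hc'j : c' j <;> simp_all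
            · have hav' : a = !v := by cases a <;> cases v <;> simp_all
              by_cases hbw : b = w
              · exact ⟨c2, hc2C, by rw [hc2i, hav'], by rw [hw, hbw]⟩
              · have hbw' : b = !w := by cases b <;> cases w <;> simp_all
                exact ⟨d, hdC, by rw [hdi', hav'], by rw [hdj, hbw']⟩
          have hsurj2 : Set.SurjOn
              (fun p : (({i, j} : Finset (Fin n)) → Bool) => (p ⟨i, hiT⟩, p ⟨j, hjT⟩))
              ↑(patterns C {i, j}) ↑(Finset.univ : Finset (Bool × Bool)) := by
            rintro ⟨a, b⟩ -
            obtain ⟨e, heC, hea, heb⟩ := hex a b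
            refine ⟨fun x : ({i, j} : Finset (Fin n)) => e x.1,
              Finset.mem_coe.mpr (hpatmem _ e heC), ?_⟩
            simp [hea, heb]
          have h4' := Finset.card_le_card_of_surjOn _ hsurj2
          have hb3 := hB i j hjne.symm
          rw [Finset.card_univ] at h4'
          simp only [Fintype.card_prod, Fintype.card_bool] at h4'
          omega
        have hcw : (c j = w ∧ c' j = !w) ∨ (c j = !w ∧ c' j = w) := by
          cases hcj : c j <;> cases hc'j : c' j <;> cases hw2 : w <;> simp_all
        obtain ⟨x, hxS, hxw, y, hyS, hyw⟩ :
            ∃ x, x ∈ S ∧ x j = w ∧ ∃ y, y ∈ S ∧ y j = !w := by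
          rcases hcw with ⟨h1, h2⟩ | ⟨h1, h2⟩
          · exact ⟨c, hcS, h1, c', hc'S, h2⟩
          · exact ⟨c', hc'S, h2, c, hcS, h1⟩
        have hssub : (C.filter fun d => d j = !w) ⊂ S := by
          refine (Finset.ssubset_iff_of_subset hsub).mpr ⟨x, hxS, fun h => ?_⟩
          have hxj := (Finset.mem_filter.mp h).2
          rw [hxw] at hxj
          exact Bool.not_ne_self w hxj.symm
        have hlt := Finset.card_lt_card hssub
        have hx' : x ∈ C.filter fun d => d j = !(!w) :=
          Finset.mem_filter.mpr ⟨(Finset.mem_filter.mp hxS).1, by rw [Bool.not_not]; exact hxw⟩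
        have hy' : y ∈ C.filter fun d => d j = !w :=
          Finset.mem_filter.mpr ⟨(Finset.mem_filter.mp hyS).1, hyw⟩
        have hmemN : (C.filter fun d => d j = !w).card ∈ N := by
          rw [hN]
          refine ⟨j, !w, ⟨y, hy'⟩, ⟨x, hx'⟩, rfl⟩
        have hle := Nat.sInf_le hmemN
        have h2 : S.card ≤ (C.filter fun d => d j = !w).card := by
          rw [hScard]; exact hle
        exact lt_irrefl _ (lt_of_lt_of_le hlt h2)
      obtain ⟨c, hcS⟩ := hSne
      refine ⟨c, (Finset.mem_filter.mp hcS).1, {i}, by simp, ?_⟩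
      intro c' hc' hnec
      refine ⟨i, by simp, fun h => hnec ?_⟩
      exact huniq c' (Finset.mem_filter.mpr ⟨hc', h.trans (Finset.mem_filter.mp hcS).2⟩) c hcS

theorem tdmin_le_two' {n : ℕ} (C : Finset (Fin n → Bool)) (hclass : IsXYClass C 3 4)
    (hC : C.Nonempty) : TDmin C ≤ 2 := by
  obtain ⟨c, hc, A, hA, hts⟩ := keyTS C hclass hC
  have h1 : TD C c ≤ 2 := le_trans (Nat.sInf_le ⟨A, rfl, hts⟩) hA
  exact le_trans (Nat.sInf_le ⟨c, hc, rfl⟩) h1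

theorem patterns_subset' {n : ℕ} {D C : Finset (Fin n → Bool)} (h : D ⊆ C)
    (A : Finset (Fin n)) : patterns D A ⊆ patterns C A := by
  intro q hq
  obtain ⟨d, hd, rfl⟩ := mem_patterns.mp hq
  exact mem_patterns.mpr ⟨d, h hd, rfl⟩

theorem isXYClass_subset' {n : ℕ} {D C : Finset (Fin n → Bool)} (h : D ⊆ C) {a b : ℕ}
    (hC : IsXYClass C a b) : IsXYClass D a b :=
  fun A hA => le_trans (Finset.card_le_card (patterns_subset' h A)) (hC A hA)

theorem stmt13 (n : ℕ) (C : Finset (Fin n → Bool)) (hclass : IsXYClass C 3 4) :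
    (C.Nonempty → TDmin C ≤ 2) ∧ RTD C ≤ 2 := by
  constructor
  · exact fun hC => tdmin_le_two' C hclass hC
  · refine csSup_le (Set.range_nonempty _) ?_
    rintro x ⟨t, rfl⟩
    show TDmin (eraseMin^[t] C) ≤ 2
    have hsub : eraseMin^[t] C ⊆ C := by
      induction t with
      | zero => simp
      | succ t ih =>
        rw [Function.iterate_succ_apply']
        refine subset_trans ?_ ih
        intro z hz
        unfold eraseMin at hz
        exact ((@Finset.mem_filter _ _ (Classical.decPred _) _ _).mp hz).1
    rcases (eraseMin^[t] C).eq_empty_or_nonempty with he | hne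
    · rw [he]
      have : {k | ∃ c ∈ (∅ : Finset (Fin n → Bool)), TD ∅ c = k} = ∅ := by simp
      unfold TDmin
      rw [this, Nat.sInf_empty]
      exact Nat.zero_le 2
    · exact tdmin_le_two' _ (isXYClass_subset' hsub hclass) hne
end

section
/- (Kuhlmann) Every finite nonempty (2,3)-class C ⊆ {0,1}^n satisfies TD_min(C) ≤ 1; i.e., f(2,3) ≤ 1. Equivalently, if no 2-element subset of [n] realizes all 4 patterns under C and moreover every 2-element subset realizes at most 3 patterns, then some concept in C is distinguished from all others by a single instance. -/
open Finset

lemma bool_ne {x y : Bool} (h : x ≠ y) : x = !y := by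
  cases x <;> cases y <;> simp_all

lemma four_patterns {n : ℕ} (C : Finset (Fin n → Bool)) (i j : Fin n) (hij : i ≠ j)
    (h : ∀ a b : Bool, ∃ c ∈ C, c i = a ∧ c j = b) :
    4 ≤ (patterns C ({i, j} : Finset (Fin n))).card := by
  classical
  set A : Finset (Fin n) := {i, j} with hA
  have hi : i ∈ A := mem_insert_self _ _
  have hj : j ∈ A := mem_insert_of_mem (mem_singleton_self _)
  set ev : (A → Bool) → Bool × Bool := fun f => (f ⟨i, hi⟩, f ⟨j, hj⟩) with hev
  have hsub : (Finset.univ : Finset (Bool × Bool)) ⊆ (patterns C A).image ev := by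
    intro p _
    obtain ⟨c, hc, h1, h2⟩ := h p.1 p.2
    refine Finset.mem_image.mpr ⟨fun k : A => c k.1, ?_, ?_⟩
    · unfold patterns
      exact @Finset.mem_image_of_mem _ _ (Classical.decEq _) _ _ _ hc
    · simp [hev, h1, h2]
  calc 4 = (Finset.univ : Finset (Bool × Bool)).card := by simp
    _ ≤ ((patterns C A).image ev).card := Finset.card_le_card hsub
    _ ≤ (patterns C A).card := Finset.card_image_le

theorem stmt14 (n : ℕ) (C : Finset (Fin n → Bool)) (hC : C.Nonempty)
    (hclass : IsXYClass C 2 3) :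
    TDmin C ≤ 1 := by
  classical
  by_cases hsingle : ∃ c ∈ C, ∃ c' ∈ C, c ≠ c'
  case neg =>
    -- C is a singleton: empty teaching set works
    obtain ⟨c, hc⟩ := hC
    push_neg at hsingle
    have hTS : IsTeachingSet C c ∅ := by
      intro c' hc' hne
      exact absurd (hsingle c' hc' c hc) hne
    have hTD : TD C c ≤ 0 := Nat.sInf_le ⟨∅, by simp, hTS⟩
    calc TDmin C ≤ TD C c := Nat.sInf_le ⟨c, hc, rfl⟩
      _ ≤ 1 := le_trans hTD (by norm_num)
  case pos =>
    obtain ⟨c0, hc0, c0', hc0', hne0⟩ := hsingle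
    obtain ⟨i0, hi0⟩ := Function.ne_iff.mp hne0
    set T : Set ℕ :=
      {m | ∃ i v, (C.filter (fun c => c i = v)).card = m ∧ 0 < m ∧ m < C.card} with hTdef
    have hT : T.Nonempty := by
      refine ⟨(C.filter (fun c => c i0 = c0 i0)).card, i0, c0 i0, rfl, ?_, ?_⟩
      · exact Finset.card_pos.mpr ⟨c0, mem_filter.mpr ⟨hc0, rfl⟩⟩
      · exact Finset.card_lt_card
          (Finset.filter_ssubset.mpr ⟨c0', hc0', fun h => hi0 h.symm⟩)
    obtain ⟨i, v, hDm, hm0, hmC⟩ := Nat.sInf_mem hT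
    set m := sInf T with hmdef
    have hmin : ∀ k ∈ T, m ≤ k := fun k hk => Nat.sInf_le hk
    clear_value m
    clear hmdef
    rcases Nat.lt_or_ge m 2 with h1 | h2
    · -- minimum is 1: unique element is taught by {i}
      have hm1 : (C.filter (fun c => c i = v)).card = 1 := by
        rw [hDm]; exact Nat.le_antisymm (Nat.lt_succ_iff.mp h1) hm0
      obtain ⟨c, hc⟩ := Finset.card_eq_one.mp hm1
      have hcmem : c ∈ C.filter (fun c => c i = v) := by
        rw [hc]; exact mem_singleton_self _
      have hcC : c ∈ C := (mem_filter.mp hcmem).1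
      have hcv : c i = v := (mem_filter.mp hcmem).2
      have hTS : IsTeachingSet C c {i} := by
        intro c' hc' hne'
        refine ⟨i, mem_singleton_self _, fun heq => ?_⟩
        have hmem' : c' ∈ C.filter (fun c => c i = v) :=
          mem_filter.mpr ⟨hc', by rw [heq, hcv]⟩
        rw [hc] at hmem'
        exact hne' (mem_singleton.mp hmem')
      have hTD : TD C c ≤ 1 := Nat.sInf_le ⟨{i}, by simp, hTS⟩
      calc TDmin C ≤ TD C c := Nat.sInf_le ⟨c, hcC, rfl⟩
        _ ≤ 1 := hTD
    · exfalso
      obtain ⟨d, hdD, d', hd'D, hdd'⟩ := Finset.one_lt_card.mp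
        (show 1 < (C.filter (fun c => c i = v)).card by rw [hDm]; exact h2)
      obtain ⟨j, hjne⟩ := Function.ne_iff.mp hdd'
      have hdC : d ∈ C := (mem_filter.mp hdD).1
      have hdi : d i = v := (mem_filter.mp hdD).2
      have hd'C : d' ∈ C := (mem_filter.mp hd'D).1
      have hd'i : d' i = v := (mem_filter.mp hd'D).2
      have hij : i ≠ j := fun h => hjne (by rw [← h, hdi, hd'i])
      have hE : ∃ e ∈ C, e i ≠ v := by
        by_contra h
        push_neg at h
        rw [Finset.filter_eq_self.mpr h] at hDm
        omega
      obtain ⟨e, heC, hei⟩ := hE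
      -- every concept off v at i agrees with e at j
      have hclaim : ∀ e' ∈ C, e' i ≠ v → e' j = e j := by
        intro e' he'C he'i
        by_contra hne'
        have h4 := four_patterns C i j hij ?_
        · have h3 := hclass {i, j} (le_trans (card_insert_le _ _) (by simp))
          exact absurd (le_trans h4 h3) (by norm_num)
        · intro a b
          by_cases ha : a = v
          · by_cases hb : b = d j
            · exact ⟨d, hdC, by rw [hdi, ha], hb.symm⟩
            · have hd'j : d' j = !(d j) := bool_ne (Ne.symm hjne)
              exact ⟨d', hd'C, by rw [hd'i, ha], hd'j.trans (bool_ne hb).symm⟩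
          · by_cases hb : b = e j
            · exact ⟨e, heC, (bool_ne hei).trans (bool_ne ha).symm, hb.symm⟩
            · exact ⟨e', he'C, (bool_ne he'i).trans (bool_ne ha).symm,
                (bool_ne hne').trans (bool_ne hb).symm⟩
      set w := e j with hw
      -- among d, d', one has j-value w, the other !w
      obtain ⟨x, hxD, hxw, y, hyD, hyw⟩ :
          ∃ x, x ∈ C.filter (fun c => c i = v) ∧ x j = w ∧
            ∃ y, y ∈ C.filter (fun c => c i = v) ∧ y j = !w := by
        by_cases hdw : d j = w
        · exact ⟨d, hdD, hdw, d', hd'D, (bool_ne (Ne.symm hjne)).trans (by rw [hdw])⟩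
        · refine ⟨d', hd'D, ?_, d, hdD, bool_ne hdw⟩
          have : d' j = !(d j) := bool_ne (Ne.symm hjne)
          rw [this, bool_ne hdw, Bool.not_not]
      have hyC : y ∈ C := (mem_filter.mp hyD).1
      set D' := C.filter (fun c => c j = !w) with hD'
      have hsubD : D' ⊆ C.filter (fun c => c i = v) := by
        intro c hc
        have hcC : c ∈ C := (mem_filter.mp hc).1
        have hcj : c j = !w := (mem_filter.mp hc).2
        refine mem_filter.mpr ⟨hcC, ?_⟩
        by_contra hne
        have := hclaim c hcC hne
        rw [hcj] at this
        exact Bool.not_ne_self w this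
      have hxnot : x ∉ D' := by
        intro hx
        have := (mem_filter.mp hx).2
        rw [hxw] at this
        exact (Bool.not_ne_self w).symm this
      have hlt : D'.card < m := by
        rw [← hDm]
        exact Finset.card_lt_card
          ((Finset.ssubset_iff_of_subset hsubD).mpr ⟨x, hxD, hxnot⟩)
      have hmem : D'.card ∈ T :=
        ⟨j, !w, rfl, Finset.card_pos.mpr ⟨y, mem_filter.mpr ⟨hyC, hyw⟩⟩, lt_trans hlt hmC⟩
      exact absurd hlt (not_lt.mpr (hmin _ hmem))
end

section
/- For concept classes C1 ⊆ {0,1}^{n1} and C2 ⊆ {0,1}^{n2}, the recursive teaching dimension of the Cartesian product satisfies RTD(C1 × C2) ≤ RTD(C1) + RTD(C2). -/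
open Finset

section Aux

variable {n : ℕ}

lemma isTeachingSet_univ (C : Finset (Fin n → Bool)) (c : Fin n → Bool) :
    IsTeachingSet C c Finset.univ := by
  intro c' _ hne
  by_contra h
  push_neg at h
  exact hne (funext fun i => h i (mem_univ i))

lemma TD_set_nonempty (C : Finset (Fin n → Bool)) (c : Fin n → Bool) :
    {k | ∃ A : Finset (Fin n), A.card = k ∧ IsTeachingSet C c A}.Nonempty :=
  ⟨(Finset.univ : Finset (Fin n)).card, Finset.univ, rfl, isTeachingSet_univ C c⟩

lemma exists_teachingSet (C : Finset (Fin n → Bool)) (c : Fin n → Bool) :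
    ∃ A : Finset (Fin n), A.card = TD C c ∧ IsTeachingSet C c A :=
  Nat.sInf_mem (TD_set_nonempty C c)

lemma TD_le_card {C : Finset (Fin n → Bool)} {c : Fin n → Bool} {A : Finset (Fin n)}
    (h : IsTeachingSet C c A) : TD C c ≤ A.card :=
  Nat.sInf_le ⟨A, rfl, h⟩

lemma TD_le_n (C : Finset (Fin n → Bool)) (c : Fin n → Bool) : TD C c ≤ n := by
  simpa using TD_le_card (isTeachingSet_univ C c)

lemma TD_mono {C D : Finset (Fin n → Bool)} (h : D ⊆ C) (c : Fin n → Bool) :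
    TD D c ≤ TD C c := by
  obtain ⟨A, hA, hTS⟩ := exists_teachingSet C c
  exact hA ▸ TD_le_card (fun c' hc' => hTS c' (h hc'))

lemma exists_TDmin {C : Finset (Fin n → Bool)} (h : C.Nonempty) :
    ∃ c ∈ C, TD C c = TDmin C := by
  obtain ⟨c0, hc0⟩ := h
  exact Nat.sInf_mem (⟨TD C c0, c0, hc0, rfl⟩ : {k | ∃ c ∈ C, TD C c = k}.Nonempty)

lemma TDmin_le_TD {C : Finset (Fin n → Bool)} {c : Fin n → Bool} (hc : c ∈ C) :
    TDmin C ≤ TD C c :=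
  Nat.sInf_le ⟨c, hc, rfl⟩

lemma TDmin_le_n (C : Finset (Fin n → Bool)) : TDmin C ≤ n := by
  rcases C.eq_empty_or_nonempty with rfl | h
  · have : {k | ∃ c ∈ (∅ : Finset (Fin n → Bool)), TD ∅ c = k} = ∅ := by simp
    simp [TDmin, this]
  · obtain ⟨c, hc⟩ := h
    exact (TDmin_le_TD hc).trans (TD_le_n C c)

lemma mem_eraseMin {C : Finset (Fin n → Bool)} {c : Fin n → Bool} :
    c ∈ eraseMin C ↔ c ∈ C ∧ TD C c ≠ TDmin C :=
  @Finset.mem_filter _ _ (Classical.decPred _) _ _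

lemma eraseMin_subset (C : Finset (Fin n → Bool)) : eraseMin C ⊆ C :=
  fun c hc => (mem_eraseMin.mp hc).1

lemma iterate_eraseMin_subset (C : Finset (Fin n → Bool)) (t : ℕ) :
    eraseMin^[t] C ⊆ C := by
  induction t with
  | zero => simp
  | succ t ih =>
    rw [Function.iterate_succ_apply']
    exact (eraseMin_subset _).trans ih

lemma card_eraseMin_lt {C : Finset (Fin n → Bool)} (h : C.Nonempty) :
    (eraseMin C).card < C.card := by
  obtain ⟨c, hc, hTD⟩ := exists_TDmin h
  apply Finset.card_lt_card
  refine ⟨eraseMin_subset C, fun hsub => ?_⟩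
  exact (mem_eraseMin.mp (hsub hc)).2 hTD

lemma exists_iterate_empty (C : Finset (Fin n → Bool)) :
    ∃ t, eraseMin^[t] C = ∅ := by
  refine ⟨C.card + 1, ?_⟩
  have key : ∀ t, eraseMin^[t] C = ∅ ∨ (eraseMin^[t] C).card + t ≤ C.card := by
    intro t
    induction t with
    | zero => right; simp
    | succ t ih =>
      rw [Function.iterate_succ_apply']
      rcases ih with h | h
      · left; rw [h]; rfl
      · rcases (eraseMin^[t] C).eq_empty_or_nonempty with he | hne
        · left; rw [he]; rfl
        · right
          have := card_eraseMin_lt hne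
          omega
  rcases key (C.card + 1) with h | h
  · exact h
  · omega

lemma RTD_bddAbove (C : Finset (Fin n → Bool)) :
    BddAbove (Set.range fun t => TDmin (eraseMin^[t] C)) :=
  ⟨n, fun _ ⟨t, ht⟩ => ht ▸ TDmin_le_n _⟩

lemma TDmin_le_RTD_of_subset {C D : Finset (Fin n → Bool)} (hsub : D ⊆ C)
    (hD : D.Nonempty) : TDmin D ≤ RTD C := by
  have hex : ∃ t, ¬ D ⊆ eraseMin^[t] C := by
    obtain ⟨t, ht⟩ := exists_iterate_empty C
    exact ⟨t, fun h => by
      obtain ⟨c, hc⟩ := hD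
      simpa [ht] using h hc⟩
  have hspec := Nat.find_spec hex
  have ht0 : Nat.find hex ≠ 0 := by
    intro h
    rw [h] at hspec
    exact hspec hsub
  obtain ⟨t, ht⟩ : ∃ t, Nat.find hex = t + 1 := ⟨Nat.find hex - 1, by omega⟩
  rw [ht] at hspec
  have h1 : D ⊆ eraseMin^[t] C := by
    by_contra h
    exact Nat.find_min hex (by omega) h
  obtain ⟨c, hcD, hcne⟩ := Finset.not_subset.mp hspec
  rw [Function.iterate_succ_apply'] at hcne
  have hcmem : c ∈ eraseMin^[t] C := h1 hcD
  have hTD : TD (eraseMin^[t] C) c = TDmin (eraseMin^[t] C) := by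
    by_contra h
    exact hcne (mem_eraseMin.mpr ⟨hcmem, h⟩)
  calc TDmin D ≤ TD D c := TDmin_le_TD hcD
    _ ≤ TD (eraseMin^[t] C) c := TD_mono h1 c
    _ = TDmin (eraseMin^[t] C) := hTD
    _ ≤ RTD C := le_csSup (RTD_bddAbove C) ⟨t, rfl⟩

end Aux

lemma prod_ext {n1 n2 : ℕ} {c c' : Fin (n1 + n2) → Bool}
    (h1 : (fun i => c' (Fin.castAdd n2 i)) = (fun i => c (Fin.castAdd n2 i)))
    (h2 : (fun j => c' (Fin.natAdd n1 j)) = (fun j => c (Fin.natAdd n1 j))) :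
    c' = c := by
  funext k
  refine Fin.addCases (fun i => ?_) (fun j => ?_) k
  · exact congrFun h1 i
  · exact congrFun h2 j

lemma TDmin_prod_sub {n1 n2 : ℕ} (C1 : Finset (Fin n1 → Bool)) (C2 : Finset (Fin n2 → Bool))
    (D : Finset (Fin (n1 + n2) → Bool)) (hsub : D ⊆ prodClass C1 C2) (hD : D.Nonempty) :
    TDmin D ≤ RTD C1 + RTD C2 := by
  classical
  set p1 : (Fin (n1 + n2) → Bool) → (Fin n1 → Bool) := fun c i => c (Fin.castAdd n2 i) with hp1
  set p2 : (Fin (n1 + n2) → Bool) → (Fin n2 → Bool) := fun c j => c (Fin.natAdd n1 j) with hp2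
  have hmemprod : ∀ d ∈ D, p1 d ∈ C1 ∧ p2 d ∈ C2 := by
    intro d hd
    have := hsub hd
    rw [prodClass] at this
    exact ((@Finset.mem_filter _ _ (Classical.decPred _) _ _).mp this).2
  set D1 : Finset (Fin n1 → Bool) := D.image p1 with hD1def
  have hD1sub : D1 ⊆ C1 := by
    intro x hx
    obtain ⟨d, hd, rfl⟩ := Finset.mem_image.mp hx
    exact (hmemprod d hd).1
  have hD1ne : D1.Nonempty := hD.image p1
  obtain ⟨c1, hc1, hc1TD⟩ := exists_TDmin hD1ne
  set D2 : Finset (Fin n2 → Bool) := (D.filter (fun d => p1 d = c1)).image p2 with hD2def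
  have hD2sub : D2 ⊆ C2 := by
    intro x hx
    obtain ⟨d, hd, rfl⟩ := Finset.mem_image.mp hx
    exact (hmemprod d (Finset.mem_filter.mp hd).1).2
  have hD2ne : D2.Nonempty := by
    obtain ⟨d, hd, hdp⟩ := Finset.mem_image.mp hc1
    exact ⟨p2 d, Finset.mem_image.mpr ⟨d, Finset.mem_filter.mpr ⟨hd, hdp⟩, rfl⟩⟩
  obtain ⟨c2, hc2, hc2TD⟩ := exists_TDmin hD2ne
  obtain ⟨c, hcfil, hcp2⟩ := Finset.mem_image.mp hc2
  rw [Finset.mem_filter] at hcfil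
  obtain ⟨hcD, hcp1⟩ := hcfil
  obtain ⟨A1, hA1card, hA1⟩ := exists_teachingSet D1 c1
  obtain ⟨A2, hA2card, hA2⟩ := exists_teachingSet D2 c2
  set A : Finset (Fin (n1 + n2)) :=
    A1.image (Fin.castAdd n2) ∪ A2.image (Fin.natAdd n1) with hAdef
  have hTS : IsTeachingSet D c A := by
    intro c' hc' hne
    by_cases h1 : p1 c' = c1
    · have hp2ne : p2 c' ≠ c2 := by
        intro h
        exact hne (prod_ext (h1.trans hcp1.symm) (h.trans hcp2.symm))
      have hmem2 : p2 c' ∈ D2 :=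
        Finset.mem_image.mpr ⟨c', Finset.mem_filter.mpr ⟨hc', h1⟩, rfl⟩
      obtain ⟨j, hj, hjne⟩ := hA2 (p2 c') hmem2 hp2ne
      refine ⟨Fin.natAdd n1 j, Finset.mem_union_right _ (Finset.mem_image_of_mem _ hj), ?_⟩
      have : c (Fin.natAdd n1 j) = c2 j := congrFun hcp2 j
      rw [this]
      exact hjne
    · have hmem1 : p1 c' ∈ D1 := Finset.mem_image.mpr ⟨c', hc', rfl⟩
      obtain ⟨i, hi, hine⟩ := hA1 (p1 c') hmem1 h1
      refine ⟨Fin.castAdd n2 i, Finset.mem_union_left _ (Finset.mem_image_of_mem _ hi), ?_⟩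
      have : c (Fin.castAdd n2 i) = c1 i := congrFun hcp1 i
      rw [this]
      exact hine
  have hAcard : A.card ≤ A1.card + A2.card :=
    (Finset.card_union_le _ _).trans
      (Nat.add_le_add (Finset.card_image_le) (Finset.card_image_le))
  calc TDmin D ≤ TD D c := TDmin_le_TD hcD
    _ ≤ A.card := TD_le_card hTS
    _ ≤ A1.card + A2.card := hAcard
    _ = TDmin D1 + TDmin D2 := by rw [hA1card, hA2card, hc1TD, hc2TD]
    _ ≤ RTD C1 + RTD C2 :=
        Nat.add_le_add (TDmin_le_RTD_of_subset hD1sub hD1ne)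
          (TDmin_le_RTD_of_subset hD2sub hD2ne)


theorem stmt17 (n1 n2 : ℕ) (C1 : Finset (Fin n1 → Bool)) (C2 : Finset (Fin n2 → Bool)) :
    RTD (prodClass C1 C2) ≤ RTD C1 + RTD C2 := by
  apply csSup_le (Set.range_nonempty _)
  rintro x ⟨t, rfl⟩
  show TDmin (eraseMin^[t] (prodClass C1 C2)) ≤ RTD C1 + RTD C2
  rcases (eraseMin^[t] (prodClass C1 C2)).eq_empty_or_nonempty with he | hne
  · rw [he]
    have : {k | ∃ c ∈ (∅ : Finset (Fin (n1+n2) → Bool)), TD ∅ c = k} = ∅ := by simp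
    simp [TDmin, this]
  · exact TDmin_prod_sub C1 C2 _ (iterate_eraseMin_subset _ t) hne
end
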